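/- Let G be a graph with α(G) > α for some positive integer α, and let G_α be the construction with cliques V_i of size α for each vertex, complete bipartite connections for edges of G, pendant vertices u_{i,j}, and hub vertices w₁,…,w_α. Then τ(G_α) < 1; in particular, taking an independent set I of size α(G) in the blown-up vertex set V = ∪V_i, the set S = (V∖I) ∪ W satisfies |S| < |V| and ω(G_α − S) = |V|. -/

import Mathlib

open SimpleGraph

/-- Number of connected components after deleting vertex set `S`. -/
noncomputable def numComp {V : Type*} (G : SimpleGraph V) (S : Set V) : ℕ :=
  Nat.card (G.induce (Sᶜ : Set V)).ConnectedComponent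

/-- `S` is a cutset: its removal leaves more than one component. -/
def IsCutset {V : Type*} (G : SimpleGraph V) (S : Set V) : Prop :=
  1 < numComp G S

/-- `G` is `t`-tough: every cutset `S` leaves at most `|S|/t` components.
Equivalently `τ(G) ≥ t` (for `t > 0`). -/
def IsTTough {V : Type*} (t : ℚ) (G : SimpleGraph V) : Prop :=
  ∀ S : Set V, IsCutset G S → t * (numComp G S : ℚ) ≤ (Nat.card S : ℚ)

/-- `τ(G) = t`: `G` is `t`-tough and `t` is the largest such value. -/
def ToughnessEq {V : Type*} (G : SimpleGraph V) (t : ℚ) : Prop :=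
  IsTTough t G ∧ ∀ t' : ℚ, IsTTough t' G → t' ≤ t

/-- The toughness of `G` equals `t`, characterized as the minimum of
`|S|/ω(G−S)` over cutsets `S` (valid for connected noncomplete graphs). -/
def ToughnessMin {V : Type*} (G : SimpleGraph V) (t : ℚ) : Prop :=
  IsLeast {q : ℚ | ∃ S : Set V, IsCutset G S ∧
    q = (Nat.card S : ℚ) / (numComp G S : ℚ)} t

/-- `G` is minimally `t`-tough. -/
def MinTough {V : Type*} (t : ℚ) (G : SimpleGraph V) : Prop :=
  ToughnessEq G t ∧ ∀ e ∈ G.edgeSet, ¬ IsTTough t (G.deleteEdges {e})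

/-- `G` is almost minimally 1-tough: `τ(G) ≥ 1` and `τ(G−e) < 1` for all edges. -/
def AlmostMinOneTough {V : Type*} (G : SimpleGraph V) : Prop :=
  IsTTough 1 G ∧ ∀ e ∈ G.edgeSet, ¬ IsTTough 1 (G.deleteEdges {e})

/-- The independence number of `G`. -/
noncomputable def indepNum {V : Type*} [Fintype V] (G : SimpleGraph V) : ℕ :=
  sSup {n | ∃ s : Set V, s.Pairwise (fun x y => ¬ G.Adj x y) ∧ Nat.card s = n}

/-- `G` is α-critical: deleting any edge increases the independence number. -/
def AlphaCritical {V : Type*} [Fintype V] (G : SimpleGraph V) : Prop :=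
  ∀ e ∈ G.edgeSet, _root_.indepNum G < _root_.indepNum (G.deleteEdges {e})

/-- The construction `G_α`: each vertex `i` of `G` is replaced by a clique
`V_i = {i} × Fin α`; edges of `G` become complete bipartite graphs between the
corresponding cliques; each `v_{i,j}` gets a pendant neighbor `u_{i,j}`; and
each hub vertex `w_j` is adjacent to all `u_{i,j}`. -/
def Galpha {V : Type*} (G : SimpleGraph V) (α : ℕ) :
    SimpleGraph ((V × Fin α) ⊕ ((V × Fin α) ⊕ Fin α)) :=
  SimpleGraph.fromRel (fun x y =>
    match x, y with
    | Sum.inl p, Sum.inl q => p.1 = q.1 ∨ G.Adj p.1 q.1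
    | Sum.inl p, Sum.inr (Sum.inl q) => p = q
    | Sum.inr (Sum.inl p), Sum.inr (Sum.inr j) => p.2 = j
    | _, _ => False)

theorem stmt13 {V : Type*} [Fintype V] (G : SimpleGraph V) (α : ℕ)
    (hα : 0 < α) (hgt : α < _root_.indepNum G) :
    ¬ IsTTough 1 (Galpha G α) ∧
    ∃ I : Set (V × Fin α),
      ∃ S : Set ((V × Fin α) ⊕ ((V × Fin α) ⊕ Fin α)),
        (Sum.inl '' I : Set ((V × Fin α) ⊕ ((V × Fin α) ⊕ Fin α))).Pairwise
          (fun x y => ¬ (Galpha G α).Adj x y) ∧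
        Nat.card I = _root_.indepNum G ∧
        S = (Sum.inl '' Iᶜ) ∪
          (Sum.inr '' (Sum.inr '' (Set.univ : Set (Fin α)))) ∧
        Nat.card S < Fintype.card (V × Fin α) ∧
        numComp (Galpha G α) S = Fintype.card (V × Fin α) := by
  classical
  -- a maximum independent set of G
  have hmem : _root_.indepNum G ∈ {n | ∃ s : Set V,
      s.Pairwise (fun x y => ¬ G.Adj x y) ∧ Nat.card s = n} := by
    apply Nat.sSup_mem
    · exact ⟨0, ∅, by simp, by simp⟩
    · refine ⟨Fintype.card V, ?_⟩
      rintro n ⟨s, -, rfl⟩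
      rw [Nat.card_coe_set_eq]
      calc s.ncard ≤ (Set.univ : Set V).ncard :=
            Set.ncard_le_ncard (Set.subset_univ s) Set.finite_univ
        _ = Fintype.card V := by simp [Set.ncard_univ, Nat.card_eq_fintype_card]
  obtain ⟨I₀, hI₀indep, hI₀card⟩ := hmem
  have hI₀pos : 0 < Nat.card I₀ := by omega
  have hVne : Nonempty V := by
    obtain ⟨⟨v, -⟩⟩ := (Nat.card_pos_iff.mp hI₀pos).1
    exact ⟨v⟩
  set j0 : Fin α := ⟨0, hα⟩ with hj0
  set I : Set (V × Fin α) := (fun v => (v, j0)) '' I₀ with hI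
  have hinj : Function.Injective (fun v : V => (v, j0)) := fun a b h => by
    simpa using congrArg Prod.fst h
  have hIcard : Nat.card I = _root_.indepNum G := by
    rw [Nat.card_coe_set_eq, hI, Set.ncard_image_of_injective _ hinj,
      ← Nat.card_coe_set_eq, hI₀card]
  set S : Set ((V × Fin α) ⊕ ((V × Fin α) ⊕ Fin α)) :=
    (Sum.inl '' Iᶜ) ∪ (Sum.inr '' (Sum.inr '' (Set.univ : Set (Fin α)))) with hS
  -- membership facts
  have hSl : ∀ p : V × Fin α, (Sum.inl p ∈ S) ↔ p ∉ I := by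
    intro p; simp [hS]
  have hSrl : ∀ p : V × Fin α, (Sum.inr (Sum.inl p) : (V × Fin α) ⊕ ((V × Fin α) ⊕ Fin α)) ∉ S := by
    intro p; simp [hS]
  have hSrr : ∀ j : Fin α, (Sum.inr (Sum.inr j) : (V × Fin α) ⊕ ((V × Fin α) ⊕ Fin α)) ∈ S := by
    intro j; simp [hS]
  -- the independent set pairwise condition
  have hIpair : (Sum.inl '' I : Set ((V × Fin α) ⊕ ((V × Fin α) ⊕ Fin α))).Pairwise
      (fun x y => ¬ (Galpha G α).Adj x y) := by
    rintro x ⟨p, hp, rfl⟩ y ⟨q, hq, rfl⟩ hne hadj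
    obtain ⟨a, ha, rfl⟩ := hp
    obtain ⟨b, hb, rfl⟩ := hq
    have hab : a ≠ b := by
      intro h; subst h; exact hne rfl
    rw [Galpha, SimpleGraph.fromRel_adj] at hadj
    obtain ⟨-, h | h⟩ := hadj <;>
    · rcases h with h | h
      · first
        | exact (hab (by simpa using h)).elim
        | exact (hab (Eq.symm (by simpa using h))).elim
      · first
        | exact hI₀indep ha hb hab h
        | exact hI₀indep hb ha (Ne.symm hab) h
  -- the function collapsing to the pendant index
  set g : ((V × Fin α) ⊕ ((V × Fin α) ⊕ Fin α)) → V × Fin α := fun x =>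
    match x with
    | Sum.inl p => p
    | Sum.inr (Sum.inl p) => p
    | Sum.inr (Sum.inr _) => (Classical.arbitrary V, j0) with hg
  have hsame : ∀ x y, x ∈ Sᶜ → y ∈ Sᶜ → (Galpha G α).Adj x y → g x = g y := by
    intro x y hx hy hadj
    rw [Galpha, SimpleGraph.fromRel_adj] at hadj
    obtain ⟨hne, hr⟩ := hadj
    rcases x with p | p | j
    · rcases y with q | q | j
      · -- both clique vertices: impossible
        exfalso
        have hp : p ∈ I := by simpa [hSl] using hx
        have hq : q ∈ I := by simpa [hSl] using hy
        obtain ⟨a, ha, rfl⟩ := hp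
        obtain ⟨b, hb, rfl⟩ := hq
        have hab : a ≠ b := by rintro rfl; exact hne rfl
        simp only [hg] at hr
        rcases hr with h | h <;> rcases h with h | h
        · exact hab (by simpa using h)
        · exact hI₀indep ha hb hab h
        · exact hab (by simpa using h.symm)
        · exact hI₀indep hb ha (Ne.symm hab) h
      · -- clique vertex and its pendant
        rcases hr with h | h
        · exact congrArg g (congrArg Sum.inl h) ▸ by simp [hg, h]
        · exact absurd h (by simp)
      · exact absurd (hSrr j) (by simpa using hy)
    · rcases y with q | q | j
      · rcases hr with h | h
        · exact absurd h (by simp)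
        · simp [hg, h]
      · exact absurd hr (by simp)
      · exact absurd (hSrr j) (by simpa using hy)
    · exact absurd (hSrr j) (by simpa using hx)
  -- set up the induced graph
  set H := (Galpha G α).induce (Sᶜ : Set ((V × Fin α) ⊕ ((V × Fin α) ⊕ Fin α))) with hH
  have hHadj : ∀ x y : ↥(Sᶜ), H.Adj x y → (Galpha G α).Adj x.val y.val := by
    intro x y h; exact h
  have hconst : ∀ x y : ↥(Sᶜ), H.Reachable x y → g x.val = g y.val := by
    intro x y hr
    obtain ⟨w⟩ := hr
    induction w with
    | nil => rfl
    | cons h p ih =>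
      exact (hsame _ _ (by exact Subtype.coe_prop _) (by exact Subtype.coe_prop _)
        (hHadj _ _ h)).trans ih
  -- component map
  set φ : H.ConnectedComponent → V × Fin α :=
    SimpleGraph.ConnectedComponent.lift (fun x => g x.val)
      (fun v w p _ => hconst v w ⟨p⟩) with hφ
  have hpendmem : ∀ p : V × Fin α,
      (Sum.inr (Sum.inl p) : (V × Fin α) ⊕ ((V × Fin α) ⊕ Fin α)) ∈ Sᶜ :=
    fun p => hSrl p
  set pend : V × Fin α → ↥(Sᶜ) := fun p => ⟨Sum.inr (Sum.inl p), hpendmem p⟩ with hpend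
  have hreachpend : ∀ z : ↥(Sᶜ), H.Reachable z (pend (g z.val)) := by
    rintro ⟨zv, hz⟩
    rcases zv with p | p | j
    · refine SimpleGraph.Adj.reachable ?_
      show (Galpha G α).Adj _ _
      rw [Galpha, SimpleGraph.fromRel_adj]
      exact ⟨by simp, Or.inl (by simp [hg, hpend])⟩
    · exact Reachable.refl _
    · exact absurd (hSrr j) (by simpa using hz)
  have hbij : Function.Bijective φ := by
    constructor
    · intro c₁ c₂
      refine SimpleGraph.ConnectedComponent.ind₂ (fun x y h => ?_) c₁ c₂
      simp only [hφ, SimpleGraph.ConnectedComponent.lift_mk] at h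
      refine SimpleGraph.ConnectedComponent.sound ?_
      exact (hreachpend x).trans (h ▸ (hreachpend y).symm)
    · intro p
      exact ⟨SimpleGraph.connectedComponentMk H (pend p), by simp [hφ, hpend, hg]⟩
  -- numComp computation
  have hnum : numComp (Galpha G α) S = Fintype.card (V × Fin α) := by
    rw [numComp]
    rw [Nat.card_eq_of_bijective φ hbij, Nat.card_eq_fintype_card]
  -- cardinality of S
  have hfin : ∀ T : Set ((V × Fin α) ⊕ ((V × Fin α) ⊕ Fin α)), T.Finite :=
    fun T => Set.toFinite T
  have hdisj : Disjoint (Sum.inl '' Iᶜ : Set ((V × Fin α) ⊕ ((V × Fin α) ⊕ Fin α)))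
      (Sum.inr '' (Sum.inr '' (Set.univ : Set (Fin α)))) := by
    rw [Set.disjoint_iff_inter_eq_empty]
    ext x; simp only [Set.mem_inter_iff, Set.mem_image, Set.mem_empty_iff_false, iff_false]
    rintro ⟨⟨p, -, rfl⟩, ⟨q, -, h⟩⟩
    exact absurd h (by simp)
  have hScard : Nat.card S = (Iᶜ : Set (V × Fin α)).ncard + α := by
    rw [Nat.card_coe_set_eq, hS, Set.ncard_union_eq hdisj (hfin _) (hfin _),
      Set.ncard_image_of_injective _ Sum.inl_injective,
      Set.ncard_image_of_injective _ Sum.inr_injective,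
      Set.ncard_image_of_injective _ Sum.inr_injective, Set.ncard_univ,
      Nat.card_eq_fintype_card, Fintype.card_fin]
  have hcompl : (Iᶜ : Set (V × Fin α)).ncard + _root_.indepNum G = Fintype.card (V × Fin α) := by
    have := Set.ncard_add_ncard_compl I (Set.toFinite _) (Set.toFinite _)
    rw [← Nat.card_coe_set_eq I, hIcard] at this
    rw [← Nat.card_eq_fintype_card]
    omega
  have hSlt : Nat.card S < Fintype.card (V × Fin α) := by omega
  refine ⟨?_, I, S, hIpair, hIcard, rfl, hSlt, hnum⟩
  -- toughness
  intro htough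
  have hcut : IsCutset (Galpha G α) S := by
    rw [IsCutset, hnum]
    have h1 : _root_.indepNum G ≤ Fintype.card V := by
      rw [← hI₀card, Nat.card_coe_set_eq]
      calc I₀.ncard ≤ (Set.univ : Set V).ncard :=
            Set.ncard_le_ncard (Set.subset_univ _) Set.finite_univ
        _ = Fintype.card V := by simp [Set.ncard_univ, Nat.card_eq_fintype_card]
    have h2 : Fintype.card V ≤ Fintype.card (V × Fin α) := by
      rw [Fintype.card_prod, Fintype.card_fin]
      exact Nat.le_mul_of_pos_right _ hα
    omega
  have := htough S hcut
  rw [hnum] at this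
  rw [one_mul] at this
  have : Fintype.card (V × Fin α) ≤ Nat.card S := by exact_mod_cast this
  omega
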